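/- If 0 < γ < 3^{−1/q}, then any finitely many vectors x₁, …, xₙ in Ti(p,γ) with consecutive supports satisfy the upper p-estimate ‖∑ⱼ₌₁ⁿ xⱼ‖ ≤ 3^{1/q} (∑ⱼ₌₁ⁿ ‖xⱼ‖^p)^{1/p}. -/

import Mathlib

open Finset

noncomputable section

/-- Coordinate restriction `E a` of a finitely supported sequence `a` to the finite set `E`. -/
def restr (E : Finset ℕ) (a : ℕ →₀ ℝ) : ℕ →₀ ℝ := a.filter (· ∈ E)

/-- `E₁ < E₂ < ⋯ < Eₙ`: a family of nonempty finite sets of naturals which are consecutive. -/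
def Consec {n : ℕ} (E : Fin n → Finset ℕ) : Prop :=
  (∀ j, (E j).Nonempty) ∧ ∀ i j : Fin n, i < j → ∀ s ∈ E i, ∀ t ∈ E j, s < t

/-- The set of quantities `γ·(∑ⱼ N(Eⱼ a))/n^{1/q}` over all consecutive families `E₁ < ⋯ < Eₙ`. -/
def tiSet (q γ : ℝ) (N : (ℕ →₀ ℝ) → ℝ) (a : ℕ →₀ ℝ) : Set ℝ :=
  {x | ∃ n : ℕ, 0 < n ∧ ∃ E : Fin n → Finset ℕ, Consec E ∧
    x = γ * (∑ j, N (restr (E j) a)) / (n : ℝ) ^ (1 / q)}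

/-- `N` satisfies the implicit equation defining the norm of the Tirilman space `Ti(p,γ)`:
`‖a‖ = max {‖a‖_∞, γ·sup (∑ⱼ ‖Eⱼ a‖)/n^{1/q}}`. -/
def TiEq (q γ : ℝ) (N : (ℕ →₀ ℝ) → ℝ) : Prop :=
  ∀ a : ℕ →₀ ℝ, N a = max (⨆ i, |a i|) (sSup (tiSet q γ N a))

/-- Finitely many finitely supported vectors have consecutive supports. -/
def ConsecSupp {n : ℕ} (x : Fin n → (ℕ →₀ ℝ)) : Prop :=
  ∀ i j : Fin n, i < j → ∀ s ∈ (x i).support, ∀ t ∈ (x j).support, s < t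

/-- A sequence of finitely supported vectors with consecutive supports. -/
def ConsecSuppSeq (x : ℕ → (ℕ →₀ ℝ)) : Prop :=
  ∀ i j : ℕ, i < j → ∀ s ∈ (x i).support, ∀ t ∈ (x j).support, s < t

/-- The dual norm on `Ti^*(p,γ)` of the functional with coefficient vector `c`:
the supremum of `∑ᵢ cᵢ aᵢ` over the unit ball of the Tirilman norm `N`. -/
def dualN (N : (ℕ →₀ ℝ) → ℝ) (c : ℕ →₀ ℝ) : ℝ :=
  sSup {x | ∃ a : ℕ →₀ ℝ, N a ≤ 1 ∧ x = ∑ i ∈ c.support, c i * a i}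


lemma restr_apply (E : Finset ℕ) (a : ℕ →₀ ℝ) (i : ℕ) :
    restr E a i = if i ∈ E then a i else 0 := by
  simp [restr, Finsupp.filter_apply]

lemma restr_support (E : Finset ℕ) (a : ℕ →₀ ℝ) :
    (restr E a).support = a.support ∩ E := by
  simp [restr, Finsupp.support_filter, Finset.filter_mem_eq_inter]

lemma restr_congr {E F : Finset ℕ} (a : ℕ →₀ ℝ)
    (h : ∀ i ∈ a.support, (i ∈ E ↔ i ∈ F)) : restr E a = restr F a := by
  ext i
  rw [restr_apply, restr_apply]
  by_cases hi : i ∈ a.support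
  · rw [if_congr (h i hi) rfl rfl]
  · have h0 : a i = 0 := Finsupp.notMem_support_iff.mp hi
    simp [h0]

lemma restr_eq_of_agree {S : Finset ℕ} {a c : ℕ →₀ ℝ}
    (h : ∀ i ∈ S, a i = c i) : restr S a = restr S c := by
  ext i
  rw [restr_apply, restr_apply]
  by_cases hi : i ∈ S
  · simp [hi, h i hi]
  · simp [hi]

lemma restr_eq_self {E : Finset ℕ} {a : ℕ →₀ ℝ} (h : a.support ⊆ E) : restr E a = a := by
  ext i
  rw [restr_apply]
  by_cases hi : i ∈ a.support
  · simp [h hi]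
  · have h0 : a i = 0 := Finsupp.notMem_support_iff.mp hi
    simp [h0]

lemma restr_eq_zero {E : Finset ℕ} {a : ℕ →₀ ℝ} (h : ∀ i ∈ a.support, i ∉ E) :
    restr E a = 0 := by
  ext i
  rw [restr_apply]
  by_cases hi : i ∈ a.support
  · simp [h i hi]
  · have h0 : a i = 0 := Finsupp.notMem_support_iff.mp hi
    simp [h0]

lemma restr_zero (E : Finset ℕ) : restr E 0 = 0 := by
  ext i; rw [restr_apply]; simp

lemma restr_restr (E F : Finset ℕ) (a : ℕ →₀ ℝ) :
    restr E (restr F a) = restr (E ∩ F) a := by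
  ext i
  rw [restr_apply, restr_apply, restr_apply]
  by_cases hE : i ∈ E <;> by_cases hF : i ∈ F <;>
    simp [hE, hF, Finset.mem_inter]

lemma restr_inter_support (E : Finset ℕ) (a : ℕ →₀ ℝ) :
    restr (E ∩ a.support) a = restr E a :=
  restr_congr a (fun i hi => by
    constructor
    · exact fun h => (Finset.mem_inter.mp h).1
    · exact fun h => Finset.mem_inter.mpr ⟨h, hi⟩)

lemma restr_finset_sum {ι : Type*} (E : Finset ℕ) (s : Finset ι) (x : ι → ℕ →₀ ℝ) :
    restr E (∑ j ∈ s, x j) = ∑ j ∈ s, restr E (x j) := by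
  ext i
  rw [Finset.sum_apply', restr_apply]
  by_cases hi : i ∈ E
  · rw [if_pos hi, Finset.sum_apply']
    exact Finset.sum_congr rfl fun j _ => by rw [restr_apply, if_pos hi]
  · rw [if_neg hi]
    exact (Finset.sum_eq_zero fun j _ => by rw [restr_apply, if_neg hi]).symm

/-- Bundle of the standing hypotheses. -/
structure Hyp (p q γ : ℝ) (N : (ℕ →₀ ℝ) → ℝ) : Prop where
  hp : 1 < p
  hpq : 1 / p + 1 / q = 1
  hγ0 : 0 < γ
  hγ3 : γ < (3 : ℝ) ^ (-(1 / q))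
  hN : TiEq q γ N

namespace Hyp

variable {p q γ : ℝ} {N : (ℕ →₀ ℝ) → ℝ}

lemma conj (H : Hyp p q γ N) : p.HolderConjugate q :=
  Real.holderConjugate_iff.mpr ⟨H.hp, by rw [← one_div, ← one_div]; exact H.hpq⟩

lemma q1 (H : Hyp p q γ N) : 1 < q := H.conj.symm.lt
lemma qpos (H : Hyp p q γ N) : 0 < q := H.conj.symm.pos
lemma ppos (H : Hyp p q γ N) : 0 < p := H.conj.pos
lemma q0 (H : Hyp p q γ N) : 0 < 1 / q := H.conj.symm.one_div_pos
lemma p0 (H : Hyp p q γ N) : 0 < 1 / p := H.conj.one_div_pos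

lemma γ1 (H : Hyp p q γ N) : γ < 1 := by
  refine lt_trans H.hγ3 ?_
  have : -(1 / q) < 0 := neg_neg_of_pos H.q0
  calc (3:ℝ) ^ (-(1/q)) < 3 ^ (0:ℝ) :=
        Real.rpow_lt_rpow_of_exponent_lt (by norm_num) this
    _ = 1 := Real.rpow_zero 3

lemma γC (H : Hyp p q γ N) : γ * (3 : ℝ) ^ (1 / q) ≤ 1 := by
  have h3 : (0:ℝ) < (3:ℝ) ^ (1/q) := Real.rpow_pos_of_pos (by norm_num) _
  have := mul_le_mul_of_nonneg_right (le_of_lt H.hγ3) (le_of_lt h3)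
  calc γ * (3:ℝ) ^ (1/q) ≤ (3:ℝ) ^ (-(1/q)) * 3 ^ (1/q) := this
    _ = 1 := by
        rw [← Real.rpow_add (by norm_num : (0:ℝ) < 3), neg_add_cancel, Real.rpow_zero]

lemma Cge1 (H : Hyp p q γ N) : 1 ≤ (3 : ℝ) ^ (1 / q) := by
  calc (1:ℝ) = 1 ^ (1/q) := (Real.one_rpow _).symm
    _ ≤ 3 ^ (1/q) := Real.rpow_le_rpow (by norm_num) (by norm_num) (le_of_lt H.q0)

end Hyp

lemma bddAbove_abs_range (a : ℕ →₀ ℝ) : BddAbove (Set.range fun i : ℕ => |a i|) := by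
  refine ⟨∑ j ∈ a.support, |a j|, ?_⟩
  rintro x ⟨i, rfl⟩
  show |a i| ≤ ∑ j ∈ a.support, |a j|
  by_cases hi : i ∈ a.support
  · exact Finset.single_le_sum (f := fun j => |a j|) (fun j _ => abs_nonneg _) hi
  · rw [Finsupp.notMem_support_iff.mp hi, abs_zero]
    exact Finset.sum_nonneg fun j _ => abs_nonneg _

section NBasic

variable {p q γ : ℝ} {N : (ℕ →₀ ℝ) → ℝ}

lemma abs_apply_le (H : Hyp p q γ N) (a : ℕ →₀ ℝ) (i : ℕ) : |a i| ≤ N a := by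
  rw [H.hN a]
  exact le_max_of_le_left (le_ciSup (bddAbove_abs_range a) i)

lemma N_nonneg (H : Hyp p q γ N) (a : ℕ →₀ ℝ) : 0 ≤ N a :=
  (abs_nonneg _).trans (abs_apply_le H a 0)

lemma iSup_abs_le (H : Hyp p q γ N) (a : ℕ →₀ ℝ) : (⨆ i, |a i|) ≤ N a := by
  rw [H.hN a]; exact le_max_left _ _

lemma sSup_tiSet_le (H : Hyp p q γ N) (a : ℕ →₀ ℝ) : sSup (tiSet q γ N a) ≤ N a := by
  rw [H.hN a]; exact le_max_right _ _

lemma consec_singletons (n : ℕ) : Consec (fun j : Fin n => ({(j : ℕ)} : Finset ℕ)) := by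
  refine ⟨fun j => ⟨(j : ℕ), Finset.mem_singleton_self _⟩, ?_⟩
  intro i j hij s hs t ht
  rw [Finset.mem_singleton] at hs ht
  subst hs; subst ht
  exact hij

lemma tiSet_nonempty (a : ℕ →₀ ℝ) : (tiSet q γ N a).Nonempty := by
  refine ⟨_, 1, one_pos, fun _ => {0}, ?_, rfl⟩
  refine ⟨fun _ => ⟨0, Finset.mem_singleton_self _⟩, ?_⟩
  intro i j hij
  exact absurd (Fin.lt_iff_val_lt_val.mp hij) (by omega)

lemma N_zero (H : Hyp p q γ N) : N 0 = 0 := by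
  have hN0 : 0 ≤ N 0 := N_nonneg H 0
  have hsup0 : (⨆ i : ℕ, |(0 : ℕ →₀ ℝ) i|) = 0 := by simp
  by_cases hbdd : BddAbove (tiSet q γ N 0)
  · -- pick n with γ * n^{1/p} ≥ 2
    obtain ⟨n, hn⟩ := exists_nat_ge ((2 / γ) ^ (p : ℝ))
    set m : ℕ := n + 1 with hm
    have hmpos : 0 < m := Nat.succ_pos n
    have hmR : (0:ℝ) < (m : ℝ) := by exact_mod_cast hmpos
    have hnm : ((2 / γ) ^ (p:ℝ) : ℝ) ≤ (m : ℝ) := by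
      refine le_trans hn ?_
      exact_mod_cast Nat.le_succ n
    have h2γ : (0:ℝ) ≤ 2 / γ := div_nonneg (by norm_num) (le_of_lt H.hγ0)
    have hml : 2 / γ ≤ (m : ℝ) ^ (1 / p) := by
      have h1 : ((2/γ) ^ (p:ℝ)) ^ (1/p) ≤ (m : ℝ) ^ (1/p) :=
        Real.rpow_le_rpow (Real.rpow_nonneg h2γ _) hnm (le_of_lt H.p0)
      rwa [← Real.rpow_mul h2γ, mul_one_div, div_self (ne_of_gt H.ppos),
        Real.rpow_one] at h1
    -- the element of tiSet for the singleton family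
    have hmem : γ * ((m : ℝ) * N 0) / (m : ℝ) ^ (1 / q) ∈ tiSet q γ N 0 := by
      refine ⟨m, hmpos, fun j => {(j : ℕ)}, consec_singletons m, ?_⟩
      congr 2
      rw [Finset.sum_congr rfl fun j _ => by rw [restr_zero],
        Finset.sum_const, Finset.card_univ, Fintype.card_fin, nsmul_eq_mul]
    have hle : γ * ((m : ℝ) * N 0) / (m : ℝ) ^ (1 / q) ≤ N 0 :=
      (le_csSup hbdd hmem).trans (sSup_tiSet_le H 0)
    -- simplify the element
    have hdiv : (m : ℝ) / (m : ℝ) ^ (1/q) = (m : ℝ) ^ (1/p) := by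
      have h1 : (1:ℝ) - 1/q = 1/p := by linarith [H.hpq]
      rw [← h1, Real.rpow_sub hmR, Real.rpow_one]
    have hx : γ * ((m:ℝ) * N 0) / (m:ℝ) ^ (1/q) = (γ * (m:ℝ) ^ (1/p)) * N 0 := by
      rw [← hdiv]; ring
    have h2 : 2 ≤ γ * (m:ℝ) ^ (1/p) := by
      have hmul := mul_le_mul_of_nonneg_left hml (le_of_lt H.hγ0)
      calc (2:ℝ) = 2/γ*γ := (div_mul_cancel₀ 2 (ne_of_gt H.hγ0)).symm
        _ = γ * (2/γ) := mul_comm _ _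
        _ ≤ γ * (m:ℝ) ^ (1/p) := hmul
    have hfin : 2 * N 0 ≤ N 0 := by
      calc 2 * N 0 ≤ (γ * (m:ℝ) ^ (1/p)) * N 0 := mul_le_mul_of_nonneg_right h2 hN0
        _ = γ * ((m:ℝ) * N 0) / (m:ℝ) ^ (1/q) := hx.symm
        _ ≤ N 0 := hle
    linarith
  · rw [H.hN 0, Real.sSup_of_not_bddAbove hbdd, hsup0, max_self]

end NBasic

section NCore

variable {p q γ : ℝ} {N : (ℕ →₀ ℝ) → ℝ}

lemma tiSet_bddAbove (H : Hyp p q γ N) (a : ℕ →₀ ℝ) : BddAbove (tiSet q γ N a) := by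
  refine ⟨γ * ∑ s ∈ a.support.powerset, N (restr s a), ?_⟩
  rintro x ⟨n, hn, E, hE, rfl⟩
  have hstep : ∑ j : Fin n, N (restr (E j) a) ≤ ∑ s ∈ a.support.powerset, N (restr s a) := by
    set S : Finset (Fin n) := univ.filter (fun j => ((E j) ∩ a.support).Nonempty) with hS
    have hzero : ∀ j ∈ (univ : Finset (Fin n)), j ∉ S → N (restr (E j) a) = 0 := by
      intro j _ hj
      have hempty : ¬ ((E j) ∩ a.support).Nonempty := by
        simpa [hS] using hj
      have h0 : restr (E j) a = 0 := restr_eq_zero (fun i hi hiE =>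
        hempty ⟨i, Finset.mem_inter.mpr ⟨hiE, hi⟩⟩)
      rw [h0, N_zero H]
    rw [← Finset.sum_subset (Finset.subset_univ S) hzero]
    have hcongr : ∑ j ∈ S, N (restr (E j) a)
        = ∑ j ∈ S, N (restr ((E j) ∩ a.support) a) :=
      Finset.sum_congr rfl fun j _ => by rw [restr_inter_support]
    have hinj : ∀ j ∈ S, ∀ j' ∈ S, (E j) ∩ a.support = (E j') ∩ a.support → j = j' := by
      intro j hj j' hj' heq
      by_contra hne
      obtain ⟨u, hu⟩ := (Finset.mem_filter.mp hj').2
      have huj : u ∈ (E j) ∩ a.support := heq ▸ hu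
      rcases lt_or_gt_of_ne hne with h | h
      · exact lt_irrefl u (hE.2 j j' h u (Finset.mem_inter.mp huj).1 u
          (Finset.mem_inter.mp hu).1)
      · exact lt_irrefl u (hE.2 j' j h u (Finset.mem_inter.mp hu).1 u
          (Finset.mem_inter.mp huj).1)
    have himg : ∑ s ∈ S.image (fun j => (E j) ∩ a.support), N (restr s a)
        = ∑ j ∈ S, N (restr ((E j) ∩ a.support) a) := Finset.sum_image hinj
    rw [hcongr, ← himg]
    refine Finset.sum_le_sum_of_subset_of_nonneg ?_ (fun s _ _ => N_nonneg H _)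
    intro s hs
    rw [Finset.mem_image] at hs
    obtain ⟨j, _, rfl⟩ := hs
    exact Finset.mem_powerset.mpr Finset.inter_subset_right
  have hT0 : 0 ≤ ∑ j : Fin n, N (restr (E j) a) :=
    Finset.sum_nonneg fun j _ => N_nonneg H _
  have h1n : 1 ≤ (n : ℝ) ^ (1 / q) := by
    have : (1:ℝ) ≤ (n : ℝ) := by exact_mod_cast hn
    calc (1:ℝ) = 1 ^ (1/q) := (Real.one_rpow _).symm
      _ ≤ (n:ℝ) ^ (1/q) := Real.rpow_le_rpow zero_le_one this (le_of_lt H.q0)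
  calc γ * (∑ j : Fin n, N (restr (E j) a)) / (n:ℝ) ^ (1/q)
      ≤ γ * (∑ j : Fin n, N (restr (E j) a)) :=
        div_le_self (mul_nonneg (le_of_lt H.hγ0) hT0) h1n
    _ ≤ γ * ∑ s ∈ a.support.powerset, N (restr s a) :=
        mul_le_mul_of_nonneg_left hstep (le_of_lt H.hγ0)

lemma mem_tiSet_le (H : Hyp p q γ N) (a : ℕ →₀ ℝ) {x : ℝ} (hx : x ∈ tiSet q γ N a) :
    x ≤ N a :=
  (le_csSup (tiSet_bddAbove H a) hx).trans (sSup_tiSet_le H a)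

lemma sum_restr_le (H : Hyp p q γ N) {m : ℕ} (K : Finset (Fin m)) (F : Fin m → Finset ℕ)
    (a : ℕ →₀ ℝ) (hne : ∀ k ∈ K, (F k).Nonempty)
    (hord : ∀ k ∈ K, ∀ k' ∈ K, k < k' → ∀ s ∈ F k, ∀ t ∈ F k', s < t) :
    γ * ∑ k ∈ K, N (restr (F k) a) ≤ (K.card : ℝ) ^ (1 / q) * N a := by
  rcases Finset.eq_empty_or_nonempty K with rfl | hKne
  · rw [Finset.sum_empty, mul_zero, Finset.card_empty, Nat.cast_zero,
      Real.zero_rpow (ne_of_gt H.q0), zero_mul]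
  · have hKpos : 0 < K.card := Finset.card_pos.mpr hKne
    set σ := K.orderIsoOfFin rfl with hσ
    set E' : Fin K.card → Finset ℕ := fun i => F (σ i) with hE'
    have hconsec : Consec E' := by
      constructor
      · exact fun i => hne _ (σ i).2
      · intro i j hij s hs t ht
        have h1 : (σ i : Fin m) < (σ j : Fin m) := Subtype.coe_lt_coe.mpr (σ.lt_iff_lt.mpr hij)
        exact hord _ (σ i).2 _ (σ j).2 h1 s hs t ht
    have hsum : ∑ i : Fin K.card, N (restr (E' i) a) = ∑ k ∈ K, N (restr (F k) a) := by
      rw [← Finset.sum_coe_sort K (fun k => N (restr (F k) a))]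
      exact Fintype.sum_equiv σ.toEquiv _ _ (fun i => rfl)
    have hmem : γ * (∑ i : Fin K.card, N (restr (E' i) a)) / ((K.card : ℕ) : ℝ) ^ (1/q)
        ∈ tiSet q γ N a := ⟨K.card, hKpos, E', hconsec, rfl⟩
    have hle := mem_tiSet_le H a hmem
    rw [hsum] at hle
    have hcpos : (0:ℝ) < ((K.card : ℕ) : ℝ) ^ (1/q) :=
      Real.rpow_pos_of_pos (by exact_mod_cast hKpos) _
    have := (div_le_iff₀ hcpos).mp hle
    linarith [this]

lemma sum_restr_le' (H : Hyp p q γ N) {m : ℕ} (G : Fin m → Finset ℕ) (a : ℕ →₀ ℝ)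
    (hord : ∀ k k' : Fin m, k < k' → ∀ s ∈ G k, ∀ t ∈ G k', s < t) :
    γ * ∑ k : Fin m, N (restr (G k) a) ≤ (m : ℝ) ^ (1 / q) * N a := by
  set K : Finset (Fin m) := univ.filter (fun k => ((G k) ∩ a.support).Nonempty) with hK
  have hzero : ∀ k ∈ (univ : Finset (Fin m)), k ∉ K → N (restr (G k) a) = 0 := by
    intro k _ hk
    have hempty : ¬ ((G k) ∩ a.support).Nonempty := by simpa [hK] using hk
    have h0 : restr (G k) a = 0 := restr_eq_zero (fun i hi hiG =>
      hempty ⟨i, Finset.mem_inter.mpr ⟨hiG, hi⟩⟩)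
    rw [h0, N_zero H]
  rw [← Finset.sum_subset (Finset.subset_univ K) hzero]
  have hne : ∀ k ∈ K, (G k).Nonempty := by
    intro k hk
    obtain ⟨u, hu⟩ := (Finset.mem_filter.mp hk).2
    exact ⟨u, (Finset.mem_inter.mp hu).1⟩
  refine le_trans (sum_restr_le H K G a hne (fun k _ k' _ h => hord k k' h)) ?_
  refine mul_le_mul_of_nonneg_right ?_ (N_nonneg H a)
  refine Real.rpow_le_rpow (by positivity) ?_ (le_of_lt H.q0)
  have : K.card ≤ m := by
    calc K.card ≤ (univ : Finset (Fin m)).card := Finset.card_filter_le _ _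
      _ = m := by rw [Finset.card_univ, Fintype.card_fin]
  exact_mod_cast this

lemma N_restr_le (H : Hyp p q γ N) (F : Finset ℕ) (a : ℕ →₀ ℝ) :
    N (restr F a) ≤ N a := by
  rw [H.hN (restr F a)]
  refine max_le (ciSup_le fun i => ?_) (csSup_le (tiSet_nonempty _) ?_)
  · rw [restr_apply]
    by_cases hi : i ∈ F
    · rw [if_pos hi]; exact abs_apply_le H a i
    · rw [if_neg hi, abs_zero]; exact N_nonneg H a
  · rintro v ⟨m, hm, G, hG, rfl⟩
    have hrw : ∑ k : Fin m, N (restr (G k) (restr F a))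
        = ∑ k : Fin m, N (restr ((G k) ∩ F) a) :=
      Finset.sum_congr rfl fun k _ => by rw [restr_restr]
    have h1 : γ * ∑ k : Fin m, N (restr ((G k) ∩ F) a) ≤ (m:ℝ)^(1/q) * N a :=
      sum_restr_le' H (fun k => (G k) ∩ F) a
        (fun k k' h s hs t ht => hG.2 k k' h s (Finset.mem_inter.mp hs).1 t
          (Finset.mem_inter.mp ht).1)
    have hmpos : (0:ℝ) < (m:ℝ)^(1/q) :=
      Real.rpow_pos_of_pos (by exact_mod_cast hm) _
    rw [div_le_iff₀ hmpos, hrw]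
    calc γ * ∑ k : Fin m, N (restr ((G k) ∩ F) a) ≤ (m:ℝ)^(1/q) * N a := h1
      _ = N a * (m:ℝ)^(1/q) := mul_comm _ _

end NCore

section Subadd

variable {p q γ : ℝ} {N : (ℕ →₀ ℝ) → ℝ}

lemma N_subadd_aux (H : Hyp p q γ N) :
    ∀ d : ℕ, ∀ (a : ℕ →₀ ℝ) (E F : Finset ℕ),
      (∀ s ∈ E, ∀ t ∈ F, s < t) →
      (restr (E ∪ F) a).support.card ≤ d →
      N (restr (E ∪ F) a) ≤ N (restr E a) + N (restr F a) := by
  intro d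
  induction d with
  | zero =>
    intro a E F _ hcard
    have hb : restr (E ∪ F) a = 0 := by
      rw [← Finsupp.support_eq_empty, ← Finset.card_eq_zero]
      omega
    rw [hb, N_zero H]
    exact add_nonneg (N_nonneg H _) (N_nonneg H _)
  | succ d IH =>
    intro a E F hEF hcard
    set b := restr (E ∪ F) a with hbdef
    have hRHS0 : 0 ≤ N (restr E a) + N (restr F a) :=
      add_nonneg (N_nonneg H _) (N_nonneg H _)
    have key : N b ≤ max (γ * N b) (N (restr E a) + N (restr F a)) := by
      conv_lhs => rw [H.hN b]
      refine max_le (le_max_of_le_right (ciSup_le fun i => ?_))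
        (csSup_le (tiSet_nonempty _) ?_)
      · rw [hbdef, restr_apply]
        by_cases hi : i ∈ E ∪ F
        · rcases Finset.mem_union.mp hi with hiE | hiF
          · rw [if_pos hi]
            have h1 : |a i| = |restr E a i| := by rw [restr_apply, if_pos hiE]
            calc |a i| = |restr E a i| := h1
              _ ≤ N (restr E a) := abs_apply_le H _ i
              _ ≤ _ := le_add_of_nonneg_right (N_nonneg H _)
          · rw [if_pos hi]
            have h1 : |a i| = |restr F a i| := by rw [restr_apply, if_pos hiF]
            calc |a i| = |restr F a i| := h1
              _ ≤ N (restr F a) := abs_apply_le H _ i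
              _ ≤ _ := le_add_of_nonneg_left (N_nonneg H _)
        · rw [if_neg hi, abs_zero]; exact hRHS0
      · rintro v ⟨m, hm, G, hG, rfl⟩
        by_cases hA : ∃ k : Fin m, b.support ⊆ G k
        · obtain ⟨k₀, hk₀⟩ := hA
          refine le_max_of_le_left ?_
          have hz : ∀ k : Fin m, k ≠ k₀ → N (restr (G k) b) = 0 := by
            intro k hk
            have hsupp : ∀ i ∈ b.support, i ∉ G k := by
              intro i hi hiG
              have hik0 : i ∈ G k₀ := hk₀ hi
              rcases lt_or_gt_of_ne hk with h | h
              · exact lt_irrefl i (hG.2 k k₀ h i hiG i hik0)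
              · exact lt_irrefl i (hG.2 k₀ k h i hik0 i hiG)
            rw [restr_eq_zero hsupp, N_zero H]
          have hsum : ∑ k : Fin m, N (restr (G k) b) = N (restr (G k₀) b) :=
            Finset.sum_eq_single k₀ (fun k _ hk => hz k hk)
              (fun h => absurd (Finset.mem_univ k₀) h)
          rw [hsum, restr_eq_self hk₀]
          have h1m : 1 ≤ (m:ℝ)^(1/q) := by
            have hm1 : (1:ℝ) ≤ (m : ℝ) := by exact_mod_cast hm
            calc (1:ℝ) = 1 ^ (1/q) := (Real.one_rpow _).symm
              _ ≤ (m:ℝ) ^ (1/q) := Real.rpow_le_rpow zero_le_one hm1 (le_of_lt H.q0)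
          exact div_le_self (mul_nonneg (le_of_lt H.hγ0) (N_nonneg H b)) h1m
        · push_neg at hA
          refine le_max_of_le_right ?_
          have hterm : ∀ k : Fin m, N (restr (G k) b)
              ≤ N (restr (G k) (restr E a)) + N (restr (G k) (restr F a)) := by
            intro k
            have he1 : restr (G k) b = restr ((G k ∩ E) ∪ (G k ∩ F)) a := by
              rw [hbdef, restr_restr, Finset.inter_union_distrib_left]
            have hord' : ∀ s ∈ G k ∩ E, ∀ t ∈ G k ∩ F, s < t := fun s hs t ht =>
              hEF s (Finset.mem_inter.mp hs).2 t (Finset.mem_inter.mp ht).2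
            have hcard' : (restr ((G k ∩ E) ∪ (G k ∩ F)) a).support.card ≤ d := by
              rw [← he1]
              have hsub : (restr (G k) b).support ⊆ b.support := by
                rw [restr_support]; exact Finset.inter_subset_left
              have hne : (restr (G k) b).support ≠ b.support := by
                intro heq
                apply hA k
                rw [restr_support] at heq
                exact Finset.inter_eq_left.mp heq
              have hlt : (restr (G k) b).support.card < b.support.card :=
                Finset.card_lt_card (Finset.ssubset_iff_subset_ne.mpr ⟨hsub, hne⟩)
              omega
            calc N (restr (G k) b) = N (restr ((G k ∩ E) ∪ (G k ∩ F)) a) := by rw [he1]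
              _ ≤ N (restr (G k ∩ E) a) + N (restr (G k ∩ F) a) := IH a _ _ hord' hcard'
              _ = N (restr (G k) (restr E a)) + N (restr (G k) (restr F a)) := by
                  rw [restr_restr, restr_restr]
          have hsum : ∑ k : Fin m, N (restr (G k) b)
              ≤ (∑ k : Fin m, N (restr (G k) (restr E a)))
                + ∑ k : Fin m, N (restr (G k) (restr F a)) := by
            rw [← Finset.sum_add_distrib]
            exact Finset.sum_le_sum fun k _ => hterm k
          have hE2 := sum_restr_le' H G (restr E a) hG.2
          have hF2 := sum_restr_le' H G (restr F a) hG.2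
          have hmpos : (0:ℝ) < (m:ℝ)^(1/q) :=
            Real.rpow_pos_of_pos (by exact_mod_cast hm) _
          rw [div_le_iff₀ hmpos]
          calc γ * ∑ k : Fin m, N (restr (G k) b)
              ≤ γ * ((∑ k : Fin m, N (restr (G k) (restr E a)))
                + ∑ k : Fin m, N (restr (G k) (restr F a))) :=
                mul_le_mul_of_nonneg_left hsum (le_of_lt H.hγ0)
            _ = γ * (∑ k : Fin m, N (restr (G k) (restr E a)))
                + γ * ∑ k : Fin m, N (restr (G k) (restr F a)) := mul_add _ _ _
            _ ≤ (m:ℝ)^(1/q) * N (restr E a) + (m:ℝ)^(1/q) * N (restr F a) :=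
                add_le_add hE2 hF2
            _ = (N (restr E a) + N (restr F a)) * (m:ℝ)^(1/q) := by ring
    by_cases hfin : N b ≤ N (restr E a) + N (restr F a)
    · exact hfin
    · have h1 : N b ≤ γ * N b := (le_max_iff.mp key).resolve_right hfin
      have h0 : 0 ≤ N b := N_nonneg H b
      have h2 : N b ≤ 0 := by nlinarith [H.γ1]
      exact h2.trans hRHS0

lemma N_subadd (H : Hyp p q γ N) (a : ℕ →₀ ℝ) (E F : Finset ℕ)
    (hEF : ∀ s ∈ E, ∀ t ∈ F, s < t) :
    N (restr (E ∪ F) a) ≤ N (restr E a) + N (restr F a) :=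
  N_subadd_aux H (restr (E ∪ F) a).support.card a E F hEF le_rfl

end Subadd

section Main

variable {p q γ : ℝ} {N : (ℕ →₀ ℝ) → ℝ}

lemma Hyp.q_cancel (H : Hyp p q γ N) {x : ℝ} (hx : 0 ≤ x) : (x ^ (1/q)) ^ q = x := by
  rw [← Real.rpow_mul hx, div_mul_cancel₀ 1 (ne_of_gt H.qpos), Real.rpow_one]

lemma Hyp.q_cancel' (H : Hyp p q γ N) {x : ℝ} (hx : 0 ≤ x) : (x ^ q) ^ (1/q) = x := by
  rw [← Real.rpow_mul hx, mul_one_div, div_self (ne_of_gt H.qpos), Real.rpow_one]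

lemma Hyp.p_cancel (H : Hyp p q γ N) {x : ℝ} (hx : 0 ≤ x) : (x ^ (1/p)) ^ p = x := by
  rw [← Real.rpow_mul hx, div_mul_cancel₀ 1 (ne_of_gt H.ppos), Real.rpow_one]

lemma hoelder_finset (H : Hyp p q γ N) {ι : Type*} (s : Finset ι) (u w : ι → ℝ)
    (hu : ∀ i ∈ s, 0 ≤ u i) (hw : ∀ i ∈ s, 0 ≤ w i) :
    ∑ i ∈ s, u i * w i ≤ (∑ i ∈ s, u i ^ q) ^ (1/q) * (∑ i ∈ s, w i ^ p) ^ (1/p) :=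
  Real.inner_le_Lp_mul_Lq_of_nonneg s H.conj.symm hu hw

lemma hoelder_pair (H : Hyp p q γ N) {X Y Z W : ℝ} (hX : 0 ≤ X) (hY : 0 ≤ Y)
    (hZ : 0 ≤ Z) (hW : 0 ≤ W) :
    X^(1/q) * Y^(1/p) + Z^(1/q) * W^(1/p) ≤ (X+Z)^(1/q) * (Y+W)^(1/p) := by
  have h := hoelder_finset H (univ : Finset (Fin 2))
    ![X^(1/q), Z^(1/q)] ![Y^(1/p), W^(1/p)]
    (fun i _ => by fin_cases i <;> simp <;> positivity)
    (fun i _ => by fin_cases i <;> simp <;> positivity)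
  rw [Fin.sum_univ_two, Fin.sum_univ_two, Fin.sum_univ_two] at h
  simp only [Matrix.cons_val_zero, Matrix.cons_val_one, Matrix.head_cons] at h
  rwa [H.q_cancel hX, H.q_cancel hZ, H.p_cancel hY, H.p_cancel hW] at h

lemma main_aux (H : Hyp p q γ N) :
    ∀ d : ℕ, ∀ n : ℕ, ∀ x : Fin n → (ℕ →₀ ℝ), ConsecSupp x →
      (∑ j, x j).support.card ≤ d →
      N (∑ j, x j) ≤ (3:ℝ) ^ (1/q) * (∑ j, N (x j) ^ p) ^ (1/p) := by
  intro d
  induction d using Nat.strong_induction_on with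
  | _ d IH =>
  intro n x hxc hcard
  set a := ∑ j, x j with ha
  set A := (∑ j, N (x j) ^ p) ^ (1/p) with hA
  have hbnn : ∀ j, 0 ≤ N (x j) := fun j => N_nonneg H _
  have hsumnn : 0 ≤ ∑ j, N (x j) ^ p :=
    Finset.sum_nonneg fun j _ => Real.rpow_nonneg (hbnn j) _
  have hA0 : 0 ≤ A := Real.rpow_nonneg hsumnn _
  have hbA : ∀ j, N (x j) ≤ A := by
    intro j
    have h1 : N (x j) ^ p ≤ ∑ j', N (x j') ^ p :=
      Finset.single_le_sum (fun j' _ => Real.rpow_nonneg (hbnn j') _) (Finset.mem_univ j)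
    calc N (x j) = ((N (x j)) ^ p) ^ (1/p) := by
          rw [← Real.rpow_mul (hbnn j), mul_one_div, div_self (ne_of_gt H.ppos),
            Real.rpow_one]
      _ ≤ A := Real.rpow_le_rpow (Real.rpow_nonneg (hbnn j) _) h1 (le_of_lt H.p0)
  have hval : ∀ j : Fin n, ∀ i ∈ (x j).support, a i = x j i := by
    intro j i hi
    rw [ha, Finsupp.finset_sum_apply]
    refine Finset.sum_eq_single j (fun j' _ hj' => ?_) (fun h => absurd (Finset.mem_univ j) h)
    by_contra hne
    have hi' : i ∈ (x j').support := Finsupp.mem_support_iff.mpr hne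
    rcases lt_or_gt_of_ne hj' with h | h
    · exact lt_irrefl i (hxc j' j h i hi' i hi)
    · exact lt_irrefl i (hxc j j' h i hi i hi')
  have hsuppsub : ∀ j : Fin n, (x j).support ⊆ a.support := by
    intro j i hi
    rw [Finsupp.mem_support_iff, hval j i hi]
    exact Finsupp.mem_support_iff.mp hi
  have hsupp_a : ∀ i ∈ a.support, ∃ j, i ∈ (x j).support := by
    intro i hi
    by_contra hno
    push_neg at hno
    have h0 : a i = 0 := by
      rw [ha, Finsupp.finset_sum_apply]
      exact Finset.sum_eq_zero fun j _ => Finsupp.notMem_support_iff.mp (hno j)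
    exact Finsupp.mem_support_iff.mp hi h0
  rw [H.hN a]
  refine max_le (ciSup_le fun i => ?_) (csSup_le (tiSet_nonempty _) ?_)
  · have habs : |a i| ≤ A := by
      by_cases hi : i ∈ a.support
      · obtain ⟨j, hj⟩ := hsupp_a i hi
        rw [hval j i hj]
        exact (abs_apply_le H (x j) i).trans (hbA j)
      · rw [Finsupp.notMem_support_iff.mp hi, abs_zero]; exact hA0
    calc |a i| ≤ A := habs
      _ ≤ 3^(1/q) * A := le_mul_of_one_le_left hA0 H.Cge1
  · rintro v ⟨m, hm, G, hG, rfl⟩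
    set J : Fin m → Finset (Fin n) :=
      fun k => univ.filter (fun j => ((G k) ∩ (x j).support).Nonempty) with hJ
    have hJmem : ∀ k j, j ∈ J k ↔ ((G k) ∩ (x j).support).Nonempty := by
      intro k j; rw [hJ]; simp
    set mid : Fin m → Finset (Fin n) :=
      fun k => (J k).filter (fun j => (∃ u ∈ J k, u < j) ∧ (∃ u ∈ J k, j < u)) with hmid
    set KK : Fin n → Finset (Fin m) :=
      fun j => univ.filter (fun k => j ∈ J k \ mid k) with hKK
    have hJle : ∀ k k' : Fin m, k < k' → ∀ j ∈ J k, ∀ j' ∈ J k', j ≤ j' := by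
      intro k k' hkk' j hj j' hj'
      by_contra hlt
      push_neg at hlt
      obtain ⟨s, hs⟩ := (hJmem k j).mp hj
      obtain ⟨t, ht⟩ := (hJmem k' j').mp hj'
      have h1 : s < t := hG.2 k k' hkk' s (Finset.mem_inter.mp hs).1 t (Finset.mem_inter.mp ht).1
      have h2 : t < s := hxc j' j hlt t (Finset.mem_inter.mp ht).2 s (Finset.mem_inter.mp hs).2
      omega
    have hmid_unique : ∀ k k' : Fin m, ∀ j, j ∈ J k → j ∈ mid k' → k = k' := by
      intro k k' j hj hjm
      by_contra hne
      rw [hmid, Finset.mem_filter] at hjm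
      obtain ⟨hjm1, ⟨u, hu, huj⟩, ⟨w, hw, hjw⟩⟩ := hjm
      rcases lt_or_gt_of_ne hne with h | h
      · have := hJle k k' h j hj u hu
        exact absurd this (by omega)
      · have := hJle k' k h w hw j hj
        exact absurd this (by omega)
    have hsplit : ∀ k : Fin m, restr (G k) a = ∑ j, restr (G k) (x j) := by
      intro k; rw [ha]; exact restr_finset_sum _ _ _
    set c' : Fin m → ℝ :=
      fun k => (∑ j ∈ mid k, N (restr (G k) (x j)) ^ p) ^ (1/p) with hc'
    have hc'nn : ∀ k, 0 ≤ c' k := fun k =>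
      Real.rpow_nonneg (Finset.sum_nonneg fun j _ => Real.rpow_nonneg (N_nonneg H _) _) _
    have h3q : (0:ℝ) ≤ 3^(1/q) := Real.rpow_nonneg (by norm_num) _
    have hstar : ∀ k : Fin m,
        N (restr (G k) a) ≤ (∑ j ∈ J k \ mid k, N (restr (G k) (x j)))
          + 3^(1/q) * c' k := by
      intro k
      rcases Finset.eq_empty_or_nonempty (J k) with hJk | hJkne
      · have hz : restr (G k) a = 0 := by
          refine restr_eq_zero (fun i hi hiG => ?_)
          obtain ⟨j, hj⟩ := hsupp_a i hi
          have hjJ : j ∈ J k := (hJmem k j).mpr ⟨i, Finset.mem_inter.mpr ⟨hiG, hj⟩⟩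
          rw [hJk] at hjJ
          exact absurd hjJ (Finset.notMem_empty j)
        rw [hz, N_zero H]
        exact add_nonneg (Finset.sum_nonneg fun j _ => N_nonneg H _)
          (mul_nonneg h3q (hc'nn k))
      · by_cases hcard1 : (J k).card ≤ 1
        · obtain ⟨j₀, hj₀⟩ := Finset.card_eq_one.mp
            (le_antisymm hcard1 (Finset.card_pos.mpr hJkne))
          have hmidk : mid k = ∅ := by
            rw [Finset.eq_empty_iff_forall_notMem]
            intro j hjm
            rw [hmid, Finset.mem_filter] at hjm
            obtain ⟨hj1, ⟨u, hu, huj⟩, ⟨w, hw, hjw⟩⟩ := hjm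
            rw [hj₀, Finset.mem_singleton] at hu hw hj1
            subst hu; subst hj1
            exact lt_irrefl j huj
          have hres : restr (G k) a = restr (G k) (x j₀) := by
            rw [hsplit k]
            refine Finset.sum_eq_single j₀ (fun j' _ hj' => ?_)
              (fun h => absurd (Finset.mem_univ j₀) h)
            refine restr_eq_zero (fun i hi hiG => ?_)
            have hjJ : j' ∈ J k := (hJmem k j').mpr ⟨i, Finset.mem_inter.mpr ⟨hiG, hi⟩⟩
            rw [hj₀, Finset.mem_singleton] at hjJ
            exact hj' hjJ
          rw [hres, hj₀, hmidk, Finset.sdiff_empty, Finset.sum_singleton]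
          have h0 : 0 ≤ 3^(1/q) * c' k := mul_nonneg h3q (hc'nn k)
          linarith
        · push_neg at hcard1
          set l := (J k).min' hJkne with hl
          set r := (J k).max' hJkne with hr
          have hlJ : l ∈ J k := Finset.min'_mem _ _
          have hrJ : r ∈ J k := Finset.max'_mem _ _
          have hlr : l < r := Finset.min'_lt_max'_of_card _ hcard1
          set B := (G k) ∩ (x l).support with hB
          set B' := (G k) ∩ (x r).support with hB'
          set M := ((G k) ∩ a.support) \ ((x l).support ∪ (x r).support) with hM
          have hblock : ∀ i, i ∈ (G k) → i ∈ a.support →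
              ∃ j, i ∈ (x j).support ∧ j ∈ J k := by
            intro i hiG hia
            obtain ⟨j, hj⟩ := hsupp_a i hia
            exact ⟨j, hj, (hJmem k j).mpr ⟨i, Finset.mem_inter.mpr ⟨hiG, hj⟩⟩⟩
          have hdisj : ∀ j j' : Fin n, j ≠ j' → ∀ i, i ∈ (x j).support →
              i ∈ (x j').support → False := by
            intro j j' hne i hi hi'
            rcases lt_or_gt_of_ne hne with h | h
            · exact lt_irrefl i (hxc j j' h i hi i hi')
            · exact lt_irrefl i (hxc j' j h i hi' i hi)
          have hsets : restr (G k) a = restr (B ∪ (M ∪ B')) a := by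
            refine restr_congr a (fun i hi => ?_)
            constructor
            · intro hiG
              obtain ⟨j, hj, hjJ⟩ := hblock i hiG hi
              by_cases hjl : j = l
              · exact Finset.mem_union_left _ (Finset.mem_inter.mpr ⟨hiG, hjl ▸ hj⟩)
              · by_cases hjr : j = r
                · exact Finset.mem_union_right _ (Finset.mem_union_right _
                    (Finset.mem_inter.mpr ⟨hiG, hjr ▸ hj⟩))
                · refine Finset.mem_union_right _ (Finset.mem_union_left _ ?_)
                  rw [hM, Finset.mem_sdiff]
                  refine ⟨Finset.mem_inter.mpr ⟨hiG, hi⟩, ?_⟩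
                  intro hcon
                  rcases Finset.mem_union.mp hcon with h | h
                  · exact hdisj j l hjl i hj h
                  · exact hdisj j r hjr i hj h
            · intro hiB
              rcases Finset.mem_union.mp hiB with h | h
              · exact (Finset.mem_inter.mp h).1
              · rcases Finset.mem_union.mp h with h' | h'
                · rw [hM, Finset.mem_sdiff] at h'
                  exact (Finset.mem_inter.mp h'.1).1
                · exact (Finset.mem_inter.mp h').1
          have hordBM : ∀ s ∈ B, ∀ t ∈ M ∪ B', s < t := by
            intro s hs t ht
            have hsl : s ∈ (x l).support := (Finset.mem_inter.mp hs).2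
            rcases Finset.mem_union.mp ht with hM1 | hB1
            · rw [hM, Finset.mem_sdiff] at hM1
              obtain ⟨ht1, ht2⟩ := hM1
              obtain ⟨j, hj, hjJ⟩ := hblock t (Finset.mem_inter.mp ht1).1
                (Finset.mem_inter.mp ht1).2
              have hjl : j ≠ l := fun h => ht2 (Finset.mem_union_left _ (h ▸ hj))
              have hlj : l < j := lt_of_le_of_ne (Finset.min'_le _ j hjJ) (Ne.symm hjl)
              exact hxc l j hlj s hsl t hj
            · exact hxc l r hlr s hsl t (Finset.mem_inter.mp hB1).2
          have hordMB' : ∀ s ∈ M, ∀ t ∈ B', s < t := by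
            intro s hs t ht
            have htr : t ∈ (x r).support := (Finset.mem_inter.mp ht).2
            rw [hM, Finset.mem_sdiff] at hs
            obtain ⟨hs1, hs2⟩ := hs
            obtain ⟨j, hj, hjJ⟩ := hblock s (Finset.mem_inter.mp hs1).1
              (Finset.mem_inter.mp hs1).2
            have hjr : j ≠ r := fun h => hs2 (Finset.mem_union_right _ (h ▸ hj))
            have hjr' : j < r := lt_of_le_of_ne (Finset.le_max' _ j hjJ) hjr
            exact hxc j r hjr' s hj t htr
          have hsub1 : N (restr (B ∪ (M ∪ B')) a)
              ≤ N (restr B a) + N (restr (M ∪ B') a) := N_subadd H a B (M ∪ B') hordBM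
          have hsub2 : N (restr (M ∪ B') a) ≤ N (restr M a) + N (restr B' a) :=
            N_subadd H a M B' hordMB'
          have hbound : ∀ j : Fin n, restr ((G k) ∩ (x j).support) a = restr (G k) (x j) := by
            intro j
            have h1 : restr ((G k) ∩ (x j).support) a
                = restr ((G k) ∩ (x j).support) (x j) :=
              restr_eq_of_agree (fun i hi => hval j i (Finset.mem_inter.mp hi).2)
            rw [h1]
            refine restr_congr (x j) (fun i hi => ?_)
            constructor
            · exact fun h => (Finset.mem_inter.mp h).1
            · exact fun h => Finset.mem_inter.mpr ⟨h, hi⟩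
          have hmidle : N (restr M a) ≤ 3^(1/q) * c' k := by
            set z : Fin n → (ℕ →₀ ℝ) :=
              fun j => if j ∈ mid k then restr (G k) (x j) else 0 with hz
            have hzsupp : ∀ j, (z j).support ⊆ (x j).support := by
              intro j
              simp only [hz]
              by_cases hj : j ∈ mid k
              · simp only [hj, if_true]
                rw [restr_support]
                exact Finset.inter_subset_left
              · simp only [hj, if_false, Finsupp.support_zero]
                exact Finset.empty_subset _
            have hzc : ConsecSupp z := fun i j hij s hs t ht =>
              hxc i j hij s (hzsupp i hs) t (hzsupp j ht)
            have hlnotmid : l ∉ mid k := by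
              intro hcon
              rw [hmid, Finset.mem_filter] at hcon
              obtain ⟨_, ⟨u, hu, hul⟩, _⟩ := hcon
              exact absurd (Finset.min'_le _ u hu) (not_le.mpr hul)
            have hrnotmid : r ∉ mid k := by
              intro hcon
              rw [hmid, Finset.mem_filter] at hcon
              obtain ⟨_, _, ⟨w, hw, hrw⟩⟩ := hcon
              exact absurd (Finset.le_max' _ w hw) (not_le.mpr hrw)
            have hMsum : restr M a = ∑ j, z j := by
              rw [ha, restr_finset_sum]
              refine Finset.sum_congr rfl (fun j _ => ?_)
              simp only [hz]
              by_cases hj : j ∈ mid k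
              · rw [if_pos hj]
                refine restr_congr (x j) (fun i hi => ?_)
                constructor
                · intro hiM
                  rw [hM, Finset.mem_sdiff] at hiM
                  exact (Finset.mem_inter.mp hiM.1).1
                · intro hiG
                  rw [hM, Finset.mem_sdiff]
                  constructor
                  · exact Finset.mem_inter.mpr ⟨hiG, hsuppsub j hi⟩
                  · intro hcon
                    rcases Finset.mem_union.mp hcon with h | h
                    · exact hdisj j l (fun he => hlnotmid (he ▸ hj)) i hi h
                    · exact hdisj j r (fun he => hrnotmid (he ▸ hj)) i hi h
              · rw [if_neg hj]
                refine restr_eq_zero (fun i hi hiM => ?_)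
                rw [hM, Finset.mem_sdiff] at hiM
                obtain ⟨hi1, hi2⟩ := hiM
                have hjJ : j ∈ J k := (hJmem k j).mpr
                  ⟨i, Finset.mem_inter.mpr ⟨(Finset.mem_inter.mp hi1).1, hi⟩⟩
                have hjl : j ≠ l := fun h => hi2 (Finset.mem_union_left _ (h ▸ hi))
                have hjr : j ≠ r := fun h => hi2 (Finset.mem_union_right _ (h ▸ hi))
                apply hj
                rw [hmid, Finset.mem_filter]
                exact ⟨hjJ, ⟨l, hlJ, lt_of_le_of_ne (Finset.min'_le _ j hjJ) (Ne.symm hjl)⟩,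
                  ⟨r, hrJ, lt_of_le_of_ne (Finset.le_max' _ j hjJ) hjr⟩⟩
            have hcardM : (∑ j, z j).support.card < d := by
              rw [← hMsum]
              have hsubM : (restr M a).support ⊆ a.support := by
                rw [restr_support]; exact Finset.inter_subset_left
              obtain ⟨i₀, hi₀⟩ := (hJmem k l).mp hlJ
              have hi₀a : i₀ ∈ a.support := hsuppsub l (Finset.mem_inter.mp hi₀).2
              have hi₀M : i₀ ∉ (restr M a).support := by
                rw [restr_support]
                intro hcon
                have hiM : i₀ ∈ M := (Finset.mem_inter.mp hcon).2
                rw [hM, Finset.mem_sdiff] at hiM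
                exact hiM.2 (Finset.mem_union_left _ (Finset.mem_inter.mp hi₀).2)
              have hlt : (restr M a).support.card < a.support.card :=
                Finset.card_lt_card (Finset.ssubset_iff_subset_ne.mpr
                  ⟨hsubM, fun h => hi₀M (h.symm ▸ hi₀a)⟩)
              omega
            have hIH := IH _ hcardM n z hzc le_rfl
            rw [← hMsum] at hIH
            have hzsum : ∑ j, N (z j) ^ p = ∑ j ∈ mid k, N (restr (G k) (x j)) ^ p := by
              rw [← Finset.sum_subset (Finset.subset_univ (mid k)) ?_]
              · refine Finset.sum_congr rfl (fun j hj => ?_)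
                simp only [hz]
                rw [if_pos hj]
              · intro j _ hj
                simp only [hz]
                rw [if_neg hj, N_zero H, Real.zero_rpow (ne_of_gt H.ppos)]
            calc N (restr M a) ≤ 3^(1/q) * (∑ j, N (z j) ^ p) ^ (1/p) := hIH
              _ = 3^(1/q) * c' k := by rw [hzsum]
          have hlnot : l ∈ J k \ mid k := by
            rw [Finset.mem_sdiff]
            refine ⟨hlJ, fun hcon => ?_⟩
            rw [hmid, Finset.mem_filter] at hcon
            obtain ⟨_, ⟨u, hu, hul⟩, _⟩ := hcon
            exact absurd (Finset.min'_le _ u hu) (not_le.mpr hul)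
          have hrnot : r ∈ J k \ mid k := by
            rw [Finset.mem_sdiff]
            refine ⟨hrJ, fun hcon => ?_⟩
            rw [hmid, Finset.mem_filter] at hcon
            obtain ⟨_, _, ⟨w, hw, hrw⟩⟩ := hcon
            exact absurd (Finset.le_max' _ w hw) (not_le.mpr hrw)
          have hpairle : N (restr (G k) (x l)) + N (restr (G k) (x r))
              ≤ ∑ j ∈ J k \ mid k, N (restr (G k) (x j)) := by
            have hpair : ({l, r} : Finset (Fin n)) ⊆ J k \ mid k := by
              intro j hj
              rcases Finset.mem_insert.mp hj with h | h
              · exact h ▸ hlnot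
              · exact (Finset.mem_singleton.mp h) ▸ hrnot
            calc N (restr (G k) (x l)) + N (restr (G k) (x r))
                = ∑ j ∈ ({l, r} : Finset (Fin n)), N (restr (G k) (x j)) :=
                  (Finset.sum_pair (f := fun j => N (restr (G k) (x j))) (ne_of_lt hlr)).symm
              _ ≤ ∑ j ∈ J k \ mid k, N (restr (G k) (x j)) :=
                  Finset.sum_le_sum_of_subset_of_nonneg hpair (fun j _ _ => N_nonneg H _)
          calc N (restr (G k) a) = N (restr (B ∪ (M ∪ B')) a) := by rw [← hsets]
            _ ≤ N (restr B a) + (N (restr M a) + N (restr B' a)) := by linarith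
            _ = N (restr (G k) (x l)) + N (restr M a) + N (restr (G k) (x r)) := by
                rw [hB, hB', hbound l, hbound r]; ring
            _ ≤ (∑ j ∈ J k \ mid k, N (restr (G k) (x j))) + 3^(1/q) * c' k := by
                linarith
    have hsum1 : ∑ k : Fin m, N (restr (G k) a)
        ≤ (∑ k : Fin m, ∑ j ∈ J k \ mid k, N (restr (G k) (x j)))
          + 3^(1/q) * ∑ k : Fin m, c' k := by
      rw [Finset.mul_sum, ← Finset.sum_add_distrib]
      exact Finset.sum_le_sum fun k _ => hstar k
    have hswap : ∑ k : Fin m, ∑ j ∈ J k \ mid k, N (restr (G k) (x j))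
        = ∑ j : Fin n, ∑ k ∈ KK j, N (restr (G k) (x j)) := by
      have h1 : ∀ k : Fin m, ∑ j ∈ J k \ mid k, N (restr (G k) (x j))
          = ∑ j : Fin n, if j ∈ J k \ mid k then N (restr (G k) (x j)) else 0 := by
        intro k
        rw [Finset.sum_ite_mem, Finset.univ_inter]
      have h2 : ∀ j : Fin n, ∑ k ∈ KK j, N (restr (G k) (x j))
          = ∑ k : Fin m, if j ∈ J k \ mid k then N (restr (G k) (x j)) else 0 := by
        intro j
        rw [hKK, Finset.sum_filter]
      rw [Finset.sum_congr rfl (fun k _ => h1 k)]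
      rw [Finset.sum_congr rfl (fun j _ => h2 j)]
      exact Finset.sum_comm
    have hSj : ∀ j : Fin n, γ * ∑ k ∈ KK j, N (restr (G k) (x j))
        ≤ ((KK j).card : ℝ)^(1/q) * N (x j) :=
      fun j => sum_restr_le H (KK j) G (x j) (fun k _ => hG.1 k)
        (fun k _ k' _ h => hG.2 k k' h)
    have hcount : (∑ j : Fin n, (KK j).card) ≤ 2 * m := by
      have h1 : ∀ j : Fin n, (KK j).card
          = ∑ k : Fin m, if j ∈ J k \ mid k then 1 else 0 := by
        intro j; rw [hKK, Finset.card_filter]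
      have h2 : ∀ k : Fin m, (∑ j : Fin n, if j ∈ J k \ mid k then 1 else 0)
          = (J k \ mid k).card := by
        intro k
        rw [Finset.sum_ite_mem, Finset.univ_inter, Finset.card_eq_sum_ones]
      have h3 : ∀ k : Fin m, (J k \ mid k).card ≤ 2 := by
        intro k
        rcases Finset.eq_empty_or_nonempty (J k) with hJk | hJkne
        · rw [hJk]
          simp
        · have hsubs : J k \ mid k
              ⊆ {((J k).min' hJkne), ((J k).max' hJkne)} := by
            intro j hj
            rw [Finset.mem_sdiff] at hj
            obtain ⟨hj1, hj2⟩ := hj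
            by_cases hEx : ∃ u ∈ J k, u < j
            · have hB : ¬ ∃ w ∈ J k, j < w := by
                intro hB
                exact hj2 (by rw [hmid, Finset.mem_filter]; exact ⟨hj1, hEx, hB⟩)
              have h3' : (J k).max' hJkne ≤ j := by
                by_contra hcon
                push_neg at hcon
                exact hB ⟨_, Finset.max'_mem _ _, hcon⟩
              have h4 : j ≤ (J k).max' hJkne := Finset.le_max' _ _ hj1
              rw [Finset.mem_insert, Finset.mem_singleton]
              exact Or.inr (le_antisymm h4 h3')
            · push_neg at hEx
              have h3' : j ≤ (J k).min' hJkne :=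
                hEx _ (Finset.min'_mem _ _)
              rw [Finset.mem_insert]
              exact Or.inl (le_antisymm h3' (Finset.min'_le _ _ hj1))
          calc (J k \ mid k).card ≤ _ := Finset.card_le_card hsubs
            _ ≤ 2 := (Finset.card_insert_le _ _).trans (by rw [Finset.card_singleton])
      calc ∑ j : Fin n, (KK j).card
          = ∑ j : Fin n, ∑ k : Fin m, if j ∈ J k \ mid k then 1 else 0 :=
            Finset.sum_congr rfl (fun j _ => h1 j)
        _ = ∑ k : Fin m, ∑ j : Fin n, if j ∈ J k \ mid k then 1 else 0 := Finset.sum_comm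
        _ = ∑ k : Fin m, (J k \ mid k).card := Finset.sum_congr rfl (fun k _ => h2 k)
        _ ≤ ∑ k : Fin m, 2 := Finset.sum_le_sum (fun k _ => h3 k)
        _ = 2 * m := by
            rw [Finset.sum_const, Finset.card_univ, Fintype.card_fin, smul_eq_mul, mul_comm]
    have hpairdisj : (↑(univ : Finset (Fin m)) : Set (Fin m)).PairwiseDisjoint mid := by
      intro k _ k' _ hne
      refine Finset.disjoint_left.mpr (fun {j} hj hj' => ?_)
      have hjJ : j ∈ J k := by
        rw [hmid] at hj
        exact Finset.mem_of_mem_filter j hj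
      exact hne (hmid_unique k k' j hjJ hj')
    set D : Finset (Fin n) := (univ : Finset (Fin m)).biUnion mid with hD
    have hc'le : ∑ k : Fin m, (c' k)^p ≤ ∑ j ∈ D, (N (x j))^p := by
      have hstep : ∀ k : Fin m, (c' k)^p = ∑ j ∈ mid k, N (restr (G k) (x j)) ^ p := by
        intro k
        simp only [hc']
        exact H.p_cancel (Finset.sum_nonneg fun j _ => Real.rpow_nonneg (N_nonneg H _) _)
      calc ∑ k : Fin m, (c' k)^p
          = ∑ k : Fin m, ∑ j ∈ mid k, N (restr (G k) (x j)) ^ p :=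
            Finset.sum_congr rfl (fun k _ => hstep k)
        _ ≤ ∑ k : Fin m, ∑ j ∈ mid k, (N (x j))^p :=
            Finset.sum_le_sum (fun k _ => Finset.sum_le_sum (fun j _ =>
              Real.rpow_le_rpow (N_nonneg H _) (N_restr_le H _ _) (le_of_lt H.ppos)))
        _ = ∑ j ∈ D, (N (x j))^p := by
            rw [hD, Finset.sum_biUnion hpairdisj]
    set NM : Finset (Fin n) := univ.filter (fun j => (KK j).Nonempty) with hNM
    have hNMD : Disjoint NM D := by
      rw [Finset.disjoint_left]
      intro j hjNM hjD
      rw [hNM, Finset.mem_filter] at hjNM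
      obtain ⟨k, hk⟩ := hjNM.2
      rw [hKK, Finset.mem_filter] at hk
      obtain ⟨k', _, hk'D⟩ := Finset.mem_biUnion.mp hjD
      have hjJ : j ∈ J k := (Finset.mem_sdiff.mp hk.2).1
      have hkk' : k = k' := hmid_unique k k' j hjJ hk'D
      rw [← hkk'] at hk'D
      exact (Finset.mem_sdiff.mp hk.2).2 hk'D
    have hYW : (∑ j ∈ NM, (N (x j))^p) + ∑ j ∈ D, (N (x j))^p
        ≤ ∑ j : Fin n, (N (x j))^p := by
      rw [← Finset.sum_union hNMD]
      exact Finset.sum_le_sum_of_subset_of_nonneg (Finset.subset_univ _)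
        (fun j _ _ => Real.rpow_nonneg (hbnn j) _)
    have hH1 : ∑ j ∈ NM, ((KK j).card : ℝ)^(1/q) * N (x j)
        ≤ (∑ j ∈ NM, ((KK j).card : ℝ))^(1/q)
          * (∑ j ∈ NM, (N (x j))^p)^(1/p) := by
      have h := hoelder_finset H NM (fun j => ((KK j).card : ℝ)^(1/q))
        (fun j => N (x j)) (fun j _ => Real.rpow_nonneg (Nat.cast_nonneg _) _)
        (fun j _ => hbnn j)
      have hc : (∑ j ∈ NM, (((KK j).card : ℝ)^(1/q))^q)
          = ∑ j ∈ NM, ((KK j).card : ℝ) :=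
        Finset.sum_congr rfl (fun j _ => H.q_cancel (Nat.cast_nonneg _))
      rwa [hc] at h
    have hext : ∑ j : Fin n, ((KK j).card : ℝ)^(1/q) * N (x j)
        = ∑ j ∈ NM, ((KK j).card : ℝ)^(1/q) * N (x j) := by
      symm
      refine Finset.sum_subset (Finset.subset_univ _) (fun j _ hj => ?_)
      rw [hNM, Finset.mem_filter] at hj
      push_neg at hj
      have hKKj : KK j = ∅ := hj (Finset.mem_univ j)
      rw [hKKj, Finset.card_empty, Nat.cast_zero, Real.zero_rpow (ne_of_gt H.q0), zero_mul]
    have hH2 : ∑ k : Fin m, c' k ≤ ((m:ℝ))^(1/q) * (∑ k : Fin m, (c' k)^p)^(1/p) := by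
      have h := hoelder_finset H (univ : Finset (Fin m)) (fun _ => (1:ℝ)) c'
        (fun _ _ => zero_le_one) (fun k _ => hc'nn k)
      simp only [one_mul, Real.one_rpow] at h
      rwa [Finset.sum_const, Finset.card_univ, Fintype.card_fin, nsmul_eq_mul, mul_one] at h
    set X : ℝ := ∑ j ∈ NM, ((KK j).card : ℝ) with hX
    set Y : ℝ := ∑ j ∈ NM, (N (x j))^p with hY
    set W : ℝ := ∑ k : Fin m, (c' k)^p with hW
    set Z : ℝ := (γ * 3^(1/q))^q * m with hZ
    have hXnn : 0 ≤ X := Finset.sum_nonneg (fun j _ => Nat.cast_nonneg _)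
    have hYnn : 0 ≤ Y := Finset.sum_nonneg (fun j _ => Real.rpow_nonneg (hbnn j) _)
    have hWnn : 0 ≤ W := Finset.sum_nonneg (fun k _ => Real.rpow_nonneg (hc'nn k) _)
    have hγ3q : 0 ≤ γ * 3^(1/q) := mul_nonneg (le_of_lt H.hγ0) h3q
    have hZnn : 0 ≤ Z := mul_nonneg (Real.rpow_nonneg hγ3q _) (Nat.cast_nonneg _)
    have hmain : γ * ∑ k : Fin m, N (restr (G k) a)
        ≤ X^(1/q) * Y^(1/p) + Z^(1/q) * W^(1/p) := by
      have s1 : γ * ∑ k : Fin m, N (restr (G k) a)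
          ≤ γ * ((∑ j : Fin n, ∑ k ∈ KK j, N (restr (G k) (x j)))
            + 3^(1/q) * ∑ k : Fin m, c' k) := by
        refine mul_le_mul_of_nonneg_left ?_ (le_of_lt H.hγ0)
        rw [← hswap]
        exact hsum1
      have s2 : γ * (∑ j : Fin n, ∑ k ∈ KK j, N (restr (G k) (x j)))
          ≤ X^(1/q) * Y^(1/p) := by
        calc γ * (∑ j : Fin n, ∑ k ∈ KK j, N (restr (G k) (x j)))
            = ∑ j : Fin n, γ * ∑ k ∈ KK j, N (restr (G k) (x j)) :=
              Finset.mul_sum _ _ _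
          _ ≤ ∑ j : Fin n, ((KK j).card : ℝ)^(1/q) * N (x j) :=
              Finset.sum_le_sum (fun j _ => hSj j)
          _ = ∑ j ∈ NM, ((KK j).card : ℝ)^(1/q) * N (x j) := hext
          _ ≤ X^(1/q) * Y^(1/p) := hH1
      have s3 : γ * (3^(1/q) * ∑ k : Fin m, c' k) ≤ Z^(1/q) * W^(1/p) := by
        calc γ * (3^(1/q) * ∑ k : Fin m, c' k)
            = (γ * 3^(1/q)) * ∑ k : Fin m, c' k := by ring
          _ ≤ (γ * 3^(1/q)) * ((m:ℝ)^(1/q) * W^(1/p)) :=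
              mul_le_mul_of_nonneg_left hH2 hγ3q
          _ = ((γ * 3^(1/q)) * (m:ℝ)^(1/q)) * W^(1/p) := by ring
          _ = Z^(1/q) * W^(1/p) := by
              rw [hZ, Real.mul_rpow (Real.rpow_nonneg hγ3q _) (Nat.cast_nonneg _),
                H.q_cancel' hγ3q]
      calc γ * ∑ k : Fin m, N (restr (G k) a) ≤ _ := s1
        _ = γ * (∑ j : Fin n, ∑ k ∈ KK j, N (restr (G k) (x j)))
            + γ * (3^(1/q) * ∑ k : Fin m, c' k) := by ring
        _ ≤ X^(1/q) * Y^(1/p) + Z^(1/q) * W^(1/p) := add_le_add s2 s3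
    have hXZ : X + Z ≤ 3 * m := by
      have hX2 : X ≤ 2 * m := by
        rw [hX]
        calc (∑ j ∈ NM, ((KK j).card : ℝ))
            ≤ ∑ j : Fin n, ((KK j).card : ℝ) :=
              Finset.sum_le_sum_of_subset_of_nonneg (Finset.subset_univ _)
                (fun j _ _ => Nat.cast_nonneg _)
          _ ≤ 2 * m := by exact_mod_cast hcount
      have hZ1 : Z ≤ m := by
        rw [hZ]
        have h1 : (γ * 3^(1/q))^q ≤ 1 :=
          Real.rpow_le_one hγ3q H.γC (le_of_lt H.qpos)
        calc (γ * 3^(1/q))^q * m ≤ 1 * (m:ℝ) :=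
            mul_le_mul_of_nonneg_right h1 (Nat.cast_nonneg _)
          _ = m := one_mul _
      linarith
    have hfinal : γ * ∑ k : Fin m, N (restr (G k) a)
        ≤ (3:ℝ)^(1/q) * (m:ℝ)^(1/q) * A := by
      have h1 : X^(1/q) * Y^(1/p) + Z^(1/q) * W^(1/p) ≤ (X+Z)^(1/q) * (Y+W)^(1/p) :=
        hoelder_pair H hXnn hYnn hZnn hWnn
      have h2 : (X+Z)^(1/q) ≤ ((3:ℝ)*m)^(1/q) :=
        Real.rpow_le_rpow (by linarith) hXZ (le_of_lt H.q0)
      have h3 : (Y+W)^(1/p) ≤ A := by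
        rw [hA]
        refine Real.rpow_le_rpow (by linarith) ?_ (le_of_lt H.p0)
        calc Y + W ≤ Y + ∑ j ∈ D, (N (x j))^p := by linarith [hc'le]
          _ ≤ ∑ j : Fin n, (N (x j))^p := hYW
      have h4 : ((3:ℝ)*m)^(1/q) = 3^(1/q) * (m:ℝ)^(1/q) :=
        Real.mul_rpow (by norm_num) (Nat.cast_nonneg _)
      calc γ * ∑ k : Fin m, N (restr (G k) a)
          ≤ X^(1/q) * Y^(1/p) + Z^(1/q) * W^(1/p) := hmain
        _ ≤ (X+Z)^(1/q) * (Y+W)^(1/p) := h1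
        _ ≤ ((3:ℝ)*m)^(1/q) * A := by
            refine mul_le_mul h2 h3 (Real.rpow_nonneg (by linarith) _)
              (Real.rpow_nonneg (by positivity) _)
        _ = 3^(1/q) * (m:ℝ)^(1/q) * A := by rw [h4]
    have hmpos : (0:ℝ) < (m:ℝ)^(1/q) :=
      Real.rpow_pos_of_pos (by exact_mod_cast hm) _
    rw [div_le_iff₀ hmpos]
    calc γ * ∑ k : Fin m, N (restr (G k) a) ≤ (3:ℝ)^(1/q) * (m:ℝ)^(1/q) * A := hfinal
      _ = 3^(1/q) * A * (m:ℝ)^(1/q) := by ring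

end Main

/-- upper `p`-estimate for consecutively supported vectors in `Ti(p,γ)`
when `0 < γ < 3^{-1/q}`. -/
theorem stmt4 (p q γ : ℝ) (hp : 1 < p) (hpq : 1 / p + 1 / q = 1)
    (hγ0 : 0 < γ) (hγ3 : γ < (3 : ℝ) ^ (-(1 / q)))
    (N : (ℕ →₀ ℝ) → ℝ) (hN : TiEq q γ N)
    (n : ℕ) (x : Fin n → (ℕ →₀ ℝ)) (hxc : ConsecSupp x) :
    N (∑ j, x j) ≤ (3 : ℝ) ^ (1 / q) * (∑ j, N (x j) ^ p) ^ (1 / p) := by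
  have H : Hyp p q γ N := ⟨hp, hpq, hγ0, hγ3, hN⟩
  exact main_aux H (∑ j, x j).support.card n x hxc le_rfl
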